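/- Let R be a commutative von Neumann regular ring that is not semi-artinian, σ the least ordinal at which the Loewy series stabilizes, and Q ∈ Spec(R). Then (R/s_σ R) ⊗_R (R/Q) ≅ R/(s_σ R + Q), and this is nonzero if and only if Q ∈ δ^σ Spec(R); hence the support of R/s_σ R, i.e. {Q ∈ Spec(R) : (R/s_σ R) ⊗_R R_Q ≠ 0}, equals the maximal perfect subset δ^σ Spec(R). -/

import Mathlib

open Ordinal

open TensorProduct

/-- The socle of a commutative ring: the sum of all simple ideals. -/
def socleIdeal (A : Type*) [CommRing A] : Ideal A :=
  sSup {I : Ideal A | IsSimpleModule A I}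

/-- The Loewy series of a commutative ring: `loewy A 0 = ⊥`,
`loewy A (α+1)` is the preimage of the socle of `A ⧸ loewy A α`, and
unions are taken at limit ordinals. -/
noncomputable def loewy (A : Type*) [CommRing A] : Ordinal.{0} → Ideal A :=
  fun o => Ordinal.limitRecOn o ⊥
    (fun _ s => Ideal.comap (Ideal.Quotient.mk s) (socleIdeal (A ⧸ s)))
    (fun o _ ih => ⨆ (b : Ordinal) (h : b < o), ih b h)

/-- A ring is semi-artinian if its Loewy series reaches the whole ring. -/
def IsSemiArtinian (A : Type*) [CommRing A] : Prop :=
  ∃ α : Ordinal.{0}, loewy A α = ⊤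

/-- The Cantor–Bendixson derivative of a subset: the set of its
non-isolated points in the subspace topology. -/
def derivSet {X : Type*} [TopologicalSpace X] (s : Set X) : Set X :=
  {x ∈ s | ∀ U : Set X, IsOpen U → x ∈ U → ¬ (U ∩ s ⊆ {x})}

/-- Iterated Cantor–Bendixson derivatives of a topological space. -/
noncomputable def cbDeriv (X : Type*) [TopologicalSpace X] : Ordinal.{0} → Set X :=
  fun o => Ordinal.limitRecOn o Set.univ
    (fun _ s => derivSet s)
    (fun o _ ih => ⋂ (b : Ordinal) (h : b < o), ih b h)


section Aux
variable {R : Type*} [CommRing R]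




lemma vnr_quot (hR : ∀ a : R, ∃ x, a * x * a = a) (I : Ideal R) :
    ∀ a : R ⧸ I, ∃ x, a * x * a = a := by
  intro a
  obtain ⟨r, rfl⟩ := Ideal.Quotient.mk_surjective a
  obtain ⟨x, hx⟩ := hR r
  exact ⟨Ideal.Quotient.mk I x, by rw [← map_mul, ← map_mul, hx]⟩

lemma vnr_isMaximal (hR : ∀ a : R, ∃ x, a * x * a = a) (P : Ideal R) (hP : P.IsPrime) :
    P.IsMaximal := by
  rw [Ideal.isMaximal_def]
  refine ⟨hP.ne_top, fun J hJ => ?_⟩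
  obtain ⟨a, haJ, haP⟩ := SetLike.exists_of_lt hJ
  obtain ⟨x, hx⟩ := hR a
  have h0 : a * (x * a - 1) ∈ P := by
    have h : a * (x * a - 1) = 0 := by linear_combination hx
    rw [h]; exact P.zero_mem
  rcases hP.mem_or_mem h0 with h | h
  · exact absurd h haP
  · rw [Ideal.eq_top_iff_one]
    have hxa : x * a ∈ J := J.mul_mem_left x haJ
    have h2 := J.sub_mem hxa (hJ.le h)
    simpa using h2

lemma vnr_radical_le (hR : ∀ a : R, ∃ x, a * x * a = a) (I : Ideal R) : I.radical ≤ I := by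
  intro a ha
  obtain ⟨n, hn⟩ := ha
  obtain ⟨x, hx⟩ := hR a
  have h2 : a = a ^ 2 * x := by linear_combination -hx
  have key : ∀ m : ℕ, a = a ^ (m + 1) * x ^ m := by
    intro m; induction m with
    | zero => simp
    | succ m ih =>
      calc a = a ^ 2 * x := h2
      _ = a * (a * x) := by ring
      _ = (a ^ (m + 1) * x ^ m) * (a * x) := by rw [← ih]
      _ = a ^ (m + 1 + 1) * x ^ (m + 1) := by ring
  match n, hn with
  | 0, hn => simp at hn; exact (Ideal.eq_top_iff_one I).mpr hn ▸ Submodule.mem_top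
  | (n + 1), hn => rw [key n]; exact I.mul_mem_right _ hn

lemma prime_one_sub_mem_iff {e : R} (he : e * e = e) {P : Ideal R} (hP : P.IsPrime) :
    1 - e ∈ P ↔ e ∉ P := by
  constructor
  · intro h1 heP
    have h : (1 : R) ∈ P := by have := P.add_mem heP h1; simpa using this
    exact hP.ne_top ((Ideal.eq_top_iff_one _).mpr h)
  · intro heP
    have h0 : e * (1 - e) ∈ P := by
      have h : e * (1 - e) = 0 := by linear_combination -he
      rw [h]; exact P.zero_mem
    rcases hP.mem_or_mem h0 with h | h
    · exact absurd h heP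
    · exact h



lemma mul_one_sub_self {e : R} (he : e * e = e) : e * (1 - e) = 0 := by linear_combination -he

lemma isAtom_span_of_isCoatom {e : R} (he : e * e = e)
    (h : IsCoatom (Ideal.span {1 - e})) : IsAtom (Ideal.span {e}) := by
  constructor
  · intro hbot
    have he0 : e = 0 := by
      have h1 : e ∈ (⊥ : Ideal R) := hbot ▸ Ideal.mem_span_singleton_self e
      simpa using h1
    apply h.1
    rw [he0]
    simp [Ideal.span_singleton_one]
  · intro J hJ
    rcases eq_or_ne (J ⊔ Ideal.span {1 - e}) ⊤ with htop | hne
    · exfalso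
      have h1 : (1 : R) ∈ J ⊔ Ideal.span {1 - e} := htop ▸ Submodule.mem_top
      rw [Submodule.mem_sup] at h1
      obtain ⟨j, hj, z, hz, hsum⟩ := h1
      rw [Ideal.mem_span_singleton] at hz
      obtain ⟨c, rfl⟩ := hz
      have heJ : e ∈ J := by
        have h2 : e = e * j := by
          have h3 : e * (j + (1 - e) * c) = e := by rw [hsum, mul_one]
          calc e = e * (j + (1 - e) * c) := h3.symm
          _ = e * j + (e * (1 - e)) * c := by ring
          _ = e * j := by rw [mul_one_sub_self he]; ring
        rw [h2]; exact J.mul_mem_left e hj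
      exact absurd ((Ideal.span_singleton_le_iff_mem _).mpr heJ) (not_le_of_gt hJ)
    · have hle : J ≤ Ideal.span {1 - e} := by
        by_contra hnle
        apply hne
        rw [sup_comm]
        exact h.2 _ (lt_of_le_of_ne le_sup_left (fun heq => hnle (heq ▸ le_sup_right)))
      rw [eq_bot_iff]
      intro j hjJ
      obtain ⟨c, hc⟩ := Ideal.mem_span_singleton.mp (hle hjJ)
      obtain ⟨d, hd⟩ := Ideal.mem_span_singleton.mp (hJ.le hjJ)
      have : j = 0 := by
        calc j = e * j := by rw [hd]; ring_nf; linear_combination -d * he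
        _ = e * ((1 - e) * c) := by rw [← hc]
        _ = (e * (1 - e)) * c := by ring
        _ = 0 := by rw [mul_one_sub_self he]; ring
      simp [this]

lemma isCoatom_span_of_isAtom {e : R} (he : e * e = e)
    (h : IsAtom (Ideal.span {e})) : IsCoatom (Ideal.span {1 - e}) := by
  constructor
  · intro htop
    have h1 : (1 : R) ∈ Ideal.span {1 - e} := htop ▸ Submodule.mem_top
    rw [Ideal.mem_span_singleton] at h1
    obtain ⟨c, hc⟩ := h1
    have he0 : e = 0 := by
      calc e = e * 1 := (mul_one e).symm
      _ = e * ((1 - e) * c) := by rw [← hc]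
      _ = (e * (1 - e)) * c := by ring
      _ = 0 := by rw [mul_one_sub_self he]; ring
    exact h.1 (by rw [he0]; simp)
  · intro J hJ
    by_cases heJ : e ∈ J
    · rw [Ideal.eq_top_iff_one]
      have h1e : 1 - e ∈ J := hJ.le (Ideal.mem_span_singleton_self _)
      have := J.add_mem heJ h1e
      simpa using this
    · exfalso
      have hbot : J ⊓ Ideal.span {e} = ⊥ := by
        apply h.2
        apply lt_of_le_of_ne inf_le_right
        intro heq
        have h4 : e ∈ J ⊓ Ideal.span {e} := by
          rw [heq]; exact Ideal.mem_span_singleton_self e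
        exact heJ h4.1
      obtain ⟨j, hjJ, hjn⟩ := SetLike.exists_of_lt hJ
      have hje : j * e ∈ J ⊓ Ideal.span {e} :=
        ⟨J.mul_mem_right e hjJ, Ideal.mem_span_singleton.mpr ⟨j, mul_comm j e⟩⟩
      rw [hbot] at hje
      have hje0 : j * e = 0 := by simpa using hje
      apply hjn
      rw [Ideal.mem_span_singleton]
      exact ⟨j, by linear_combination hje0⟩
lemma socleIdeal_le_iff {A : Type*} [CommRing A] (hA : ∀ a : A, ∃ x, a * x * a = a)
    (P : PrimeSpectrum A) :
    socleIdeal A ≤ P.asIdeal ↔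
      ∀ U : Set (PrimeSpectrum A), IsOpen U → P ∈ U → ¬ (U ⊆ {P}) := by
  have hsle : socleIdeal A ≤ P.asIdeal ↔ ∀ I : Ideal A, IsAtom I → I ≤ P.asIdeal := by
    rw [socleIdeal, sSup_le_iff]
    exact ⟨fun h I hI => h I (Set.mem_setOf_eq ▸ isSimpleModule_iff_isAtom.mpr hI),
      fun h I hI => h I (isSimpleModule_iff_isAtom.mp hI)⟩
  rw [hsle]
  constructor
  · intro hat U hU hPU hsub
    obtain ⟨v, ⟨f, rfl⟩, hPv, hvU⟩ :=
      TopologicalSpace.IsTopologicalBasis.exists_subset_of_mem_open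
        PrimeSpectrum.isTopologicalBasis_basic_opens hPU hU
    have hfP : f ∉ P.asIdeal := hPv
    obtain ⟨x, hx⟩ := hA f
    set e := x * f with hedef
    have he : e * e = e := by rw [hedef]; linear_combination x * hx
    have hef : f * e = f := by rw [hedef]; linear_combination hx
    have heP : e ∉ P.asIdeal := fun h =>
      hfP (by rw [← hef]; exact P.asIdeal.mul_mem_left f h)
    have hspan : Ideal.span {e} = Ideal.span {f} := by
      apply le_antisymm
      · rw [Ideal.span_singleton_le_iff_mem, Ideal.mem_span_singleton]
        exact ⟨x, mul_comm x f⟩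
      · rw [Ideal.span_singleton_le_iff_mem, Ideal.mem_span_singleton]
        exact ⟨f, by rw [mul_comm e f]; exact hef.symm⟩
    have hM : Ideal.span {1 - e} = P.asIdeal := by
      have hset : {J : Ideal A | Ideal.span {1 - e} ≤ J ∧ J.IsPrime} = {P.asIdeal} := by
        ext J
        simp only [Set.mem_setOf_eq, Set.mem_singleton_iff]
        constructor
        · rintro ⟨hle, hJp⟩
          have h1e : 1 - e ∈ J := hle (Ideal.mem_span_singleton_self _)
          have heJ : e ∉ J := (prime_one_sub_mem_iff he hJp).mp h1e
          have hfJ : f ∉ J := fun hf => heJ (by rw [hedef]; exact J.mul_mem_left x hf)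
          have hmem : (⟨J, hJp⟩ : PrimeSpectrum A) ∈
              (PrimeSpectrum.basicOpen f : Set (PrimeSpectrum A)) := hfJ
          have := hsub (hvU hmem)
          exact congrArg PrimeSpectrum.asIdeal this
        · rintro rfl
          refine ⟨?_, P.isPrime⟩
          rw [Ideal.span_singleton_le_iff_mem]
          exact (prime_one_sub_mem_iff he P.isPrime).mpr heP
      have hrad : (Ideal.span {1 - e}).radical = P.asIdeal := by
        rw [Ideal.radical_eq_sInf, hset, sInf_singleton]
      rw [← hrad]
      exact le_antisymm Ideal.le_radical (vnr_radical_le hA _)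
    have hPmax : IsCoatom P.asIdeal :=
      Ideal.isMaximal_def.mp (vnr_isMaximal hA _ P.isPrime)
    have hatom : IsAtom (Ideal.span {e}) := isAtom_span_of_isCoatom he (hM ▸ hPmax)
    exact heP (hat _ hatom (Ideal.mem_span_singleton_self e))
  · intro hni I hI
    by_contra hIP
    obtain ⟨a, haI, haP⟩ := SetLike.not_le_iff_exists.mp hIP
    obtain ⟨x, hx⟩ := hA a
    set e := x * a with hedef
    have he : e * e = e := by rw [hedef]; linear_combination x * hx
    have hea : a * e = a := by rw [hedef]; linear_combination hx
    have heP : e ∉ P.asIdeal := fun h =>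
      haP (by rw [← hea]; exact P.asIdeal.mul_mem_left a h)
    have hspanA : Ideal.span {a} = I := by
      have hle : Ideal.span {a} ≤ I := (Ideal.span_singleton_le_iff_mem _).mpr haI
      rcases lt_or_eq_of_le hle with hlt | heq
      · exfalso
        have hb := hI.2 _ hlt
        have : a ∈ (⊥ : Ideal A) := hb ▸ Ideal.mem_span_singleton_self a
        simp only [Ideal.mem_bot] at this
        exact haP (this ▸ P.asIdeal.zero_mem)
      · exact heq
    have hspanE : Ideal.span {e} = I := by
      rw [← hspanA]
      apply le_antisymm
      · rw [Ideal.span_singleton_le_iff_mem, Ideal.mem_span_singleton]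
        exact ⟨x, mul_comm x a⟩
      · rw [Ideal.span_singleton_le_iff_mem, Ideal.mem_span_singleton]
        exact ⟨a, by rw [mul_comm e a]; exact hea.symm⟩
    have hcoat : IsCoatom (Ideal.span {1 - e}) :=
      isCoatom_span_of_isAtom he (hspanE ▸ hI)
    have hspan_eq : ∀ P' : PrimeSpectrum A, 1 - e ∈ P'.asIdeal →
        Ideal.span {1 - e} = P'.asIdeal := by
      intro P' h1e
      have hle : Ideal.span {1 - e} ≤ P'.asIdeal := (Ideal.span_singleton_le_iff_mem _).mpr h1e
      rcases lt_or_eq_of_le hle with hlt | heq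
      · exact absurd (hcoat.2 _ hlt) P'.isPrime.ne_top
      · exact heq
    have hU : (PrimeSpectrum.basicOpen e : Set (PrimeSpectrum A)) = {P} := by
      ext P'
      simp only [Set.mem_singleton_iff, SetLike.mem_coe, PrimeSpectrum.mem_basicOpen]
      constructor
      · intro heP'
        have h1 := hspan_eq P' ((prime_one_sub_mem_iff he P'.isPrime).mpr heP')
        have h2 := hspan_eq P ((prime_one_sub_mem_iff he P.isPrime).mpr heP)
        exact PrimeSpectrum.ext (h1.symm.trans h2)
      · rintro rfl
        exact heP
    exact hni _ (PrimeSpectrum.basicOpen e).isOpen (by exact heP) hU.le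
lemma loewy_zero (A : Type*) [CommRing A] : loewy A 0 = ⊥ := by
  simp only [loewy, Ordinal.limitRecOn_zero]

lemma loewy_succ (A : Type*) [CommRing A] (o : Ordinal.{0}) :
    loewy A (o + 1) =
      Ideal.comap (Ideal.Quotient.mk (loewy A o)) (socleIdeal (A ⧸ loewy A o)) := by
  simp only [loewy, Ordinal.limitRecOn_add_one]; rfl

lemma loewy_limit (A : Type*) [CommRing A] (o : Ordinal.{0}) (ho : Order.IsSuccLimit o) :
    loewy A o = ⨆ (b : Ordinal) (_ : b < o), loewy A b := by
  simp only [loewy]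
  rw [Ordinal.limitRecOn_limit _ _ _ _ ho]

lemma cbDeriv_zero (X : Type*) [TopologicalSpace X] : cbDeriv X 0 = Set.univ := by
  simp only [cbDeriv, Ordinal.limitRecOn_zero]

lemma cbDeriv_succ (X : Type*) [TopologicalSpace X] (o : Ordinal.{0}) :
    cbDeriv X (o + 1) = derivSet (cbDeriv X o) := by
  simp only [cbDeriv, Ordinal.limitRecOn_add_one]

lemma cbDeriv_limit (X : Type*) [TopologicalSpace X] (o : Ordinal.{0}) (ho : Order.IsSuccLimit o) :
    cbDeriv X o = ⋂ (b : Ordinal) (_ : b < o), cbDeriv X b := by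
  simp only [cbDeriv]
  rw [Ordinal.limitRecOn_limit _ _ _ _ ho]

lemma loewy_le_iff (R : Type*) [CommRing R] (hR : ∀ a : R, ∃ x, a * x * a = a)
    (σ : Ordinal.{0}) :
    ∀ Q : PrimeSpectrum R, (loewy R σ ≤ Q.asIdeal ↔ Q ∈ cbDeriv (PrimeSpectrum R) σ) := by
  induction σ using Ordinal.limitRecOn with
  | zero =>
    intro Q
    rw [loewy_zero, cbDeriv_zero]
    simp
  | add_one β ih =>
    intro Q
    rw [loewy_succ, cbDeriv_succ]
    have hZ : cbDeriv (PrimeSpectrum R) β = PrimeSpectrum.zeroLocus (loewy R β : Set R) := by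
      ext Q'
      rw [PrimeSpectrum.mem_zeroLocus, SetLike.coe_subset_coe]
      exact (ih Q').symm
    by_cases hIQ : loewy R β ≤ Q.asIdeal
    · set I := loewy R β with hIdef
      set A := R ⧸ I with hAdef
      have hmks : Function.Surjective (Ideal.Quotient.mk I) := Ideal.Quotient.mk_surjective
      have hker : RingHom.ker (Ideal.Quotient.mk I) = I := Ideal.mk_ker
      haveI hQpr : Q.asIdeal.IsPrime := Q.isPrime
      have hQp : (Ideal.map (Ideal.Quotient.mk I) Q.asIdeal).IsPrime :=
        Ideal.map_isPrime_of_surjective hmks (by rw [hker]; exact hIQ)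
      set Q' : PrimeSpectrum A := ⟨Ideal.map (Ideal.Quotient.mk I) Q.asIdeal, hQp⟩ with hQ'def
      have hcm : Ideal.comap (Ideal.Quotient.mk I) Q'.asIdeal = Q.asIdeal := by
        show Ideal.comap (Ideal.Quotient.mk I) (Ideal.map (Ideal.Quotient.mk I) Q.asIdeal)
          = Q.asIdeal
        rw [Ideal.comap_map_of_surjective _ hmks, ← RingHom.ker_eq_comap_bot, hker,
          sup_eq_left.mpr hIQ]
      have hLHS : Ideal.comap (Ideal.Quotient.mk I) (socleIdeal A) ≤ Q.asIdeal ↔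
          socleIdeal A ≤ Q'.asIdeal := by
        rw [← hcm]
        exact Ideal.comap_le_comap_iff_of_surjective _ hmks _ _
      rw [hLHS, socleIdeal_le_iff (vnr_quot hR I) Q', hZ]
      set φ : PrimeSpectrum A → PrimeSpectrum R := (PrimeSpectrum.comap (Ideal.Quotient.mk I))
      have hemb := PrimeSpectrum.isClosedEmbedding_comap_of_surjective A (Ideal.Quotient.mk I) hmks
      have hrange : Set.range φ = PrimeSpectrum.zeroLocus (I : Set R) := by
        rw [show Set.range φ = Set.range (PrimeSpectrum.comap (Ideal.Quotient.mk I)) from rfl,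
          range_comap_of_surjective _ _ hmks, hker]
      have hφQ : φ Q' = Q := PrimeSpectrum.ext hcm
      constructor
      · intro h
        refine ⟨(PrimeSpectrum.mem_zeroLocus _ _).mpr (SetLike.coe_subset_coe.mpr hIQ), ?_⟩
        intro U hU hQU hsub
        refine h (φ ⁻¹' U) (hU.preimage hemb.continuous) (by rw [Set.mem_preimage, hφQ]; exact hQU) ?_
        intro y hy
        have h1 : φ y ∈ U := hy
        have h2 : φ y ∈ PrimeSpectrum.zeroLocus (I : Set R) := hrange ▸ Set.mem_range_self y
        have h3 : φ y = Q := hsub ⟨h1, h2⟩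
        exact hemb.injective (h3.trans hφQ.symm)
      · rintro ⟨hQZ, h⟩ V hV hQ'V hVsub
        obtain ⟨U, hU, hUV⟩ := hemb.toIsInducing.isOpen_iff.mp hV
        have hQU : Q ∈ U := by
          have : φ Q' ∈ U := by rw [← hUV] at hQ'V; exact hQ'V
          rwa [hφQ] at this
        apply h U hU hQU
        intro z hz
        obtain ⟨y, rfl⟩ := hrange ▸ hz.2
        have hyV : y ∈ V := by rw [← hUV]; exact hz.1
        have hyQ : y = Q' := hVsub hyV
        rw [hyQ, hφQ]
        rfl
    · have hIle : loewy R β ≤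
          Ideal.comap (Ideal.Quotient.mk (loewy R β)) (socleIdeal (R ⧸ loewy R β)) := by
        conv_lhs => rw [← Ideal.mk_ker (I := loewy R β)]
        rw [RingHom.ker_eq_comap_bot]
        exact Ideal.comap_mono bot_le
      constructor
      · intro h; exact absurd (hIle.trans h) hIQ
      · intro h; exact absurd ((ih Q).mpr h.1) hIQ
  | limit o ho ih =>
    intro Q
    rw [loewy_limit R o ho, cbDeriv_limit _ o ho]
    simp only [iSup_le_iff, Set.mem_iInter]
    exact ⟨fun h b hb => (ih b hb Q).mp (h b hb), fun h b hb => (ih b hb Q).mpr (h b hb)⟩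


lemma algebraMap_qtq_surjective (I J : Ideal R) :
    Function.Surjective (algebraMap R ((R ⧸ I) ⊗[R] (R ⧸ J))) := by
  intro t
  induction t with
  | zero => exact ⟨0, map_zero _⟩
  | tmul a b =>
    obtain ⟨x, rfl⟩ := Ideal.Quotient.mk_surjective a
    obtain ⟨y, rfl⟩ := Ideal.Quotient.mk_surjective b
    refine ⟨x * y, ?_⟩
    rw [map_mul]
    rw [Algebra.TensorProduct.algebraMap_apply, Algebra.TensorProduct.algebraMap_apply' y,
      Algebra.TensorProduct.tmul_mul_tmul]
    rw [Ideal.Quotient.algebraMap_eq, Ideal.Quotient.algebraMap_eq]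
    rw [mul_one, one_mul]
  | add u v hu hv =>
    obtain ⟨x, rfl⟩ := hu
    obtain ⟨y, rfl⟩ := hv
    exact ⟨x + y, map_add _ x y⟩

lemma algHom_eq_id {S : Type*} [Semiring S] [Algebra R S]
    (hsurj : Function.Surjective (algebraMap R S)) (f : S →ₐ[R] S) : f = AlgHom.id R S := by
  refine AlgHom.ext fun s => ?_
  obtain ⟨r, rfl⟩ := hsurj s
  simp [f.commutes]

lemma algebraMap_quot_surjective (K : Ideal R) :
    Function.Surjective (algebraMap R (R ⧸ K)) := by
  intro t
  obtain ⟨r, rfl⟩ := Ideal.Quotient.mk_surjective t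
  exact ⟨r, by rw [Ideal.Quotient.algebraMap_eq]⟩

noncomputable def quotTensorQuot (I J : Ideal R) :
    ((R ⧸ I) ⊗[R] (R ⧸ J)) ≃ₐ[R] R ⧸ (I ⊔ J) := by
  refine AlgEquiv.ofAlgHom
    (Algebra.TensorProduct.lift
      (Ideal.Quotient.liftₐ I (Ideal.Quotient.mkₐ R (I ⊔ J))
        (fun a ha => Ideal.Quotient.eq_zero_iff_mem.mpr (le_sup_left (a := I) ha)))
      (Ideal.Quotient.liftₐ J (Ideal.Quotient.mkₐ R (I ⊔ J))
        (fun a ha => Ideal.Quotient.eq_zero_iff_mem.mpr (le_sup_right (b := J) ha)))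
      (fun x y => Commute.all _ _))
    (Ideal.Quotient.liftₐ (I ⊔ J) (Algebra.ofId R _) ?_) ?_ ?_
  · intro a ha
    rw [Submodule.mem_sup] at ha
    obtain ⟨i, hi, j, hj, rfl⟩ := ha
    show algebraMap R ((R ⧸ I) ⊗[R] (R ⧸ J)) (i + j) = 0
    rw [map_add]
    have h1 : algebraMap R ((R ⧸ I) ⊗[R] (R ⧸ J)) i = 0 := by
      rw [Algebra.TensorProduct.algebraMap_apply, Ideal.Quotient.algebraMap_eq,
        Ideal.Quotient.eq_zero_iff_mem.mpr hi, TensorProduct.zero_tmul]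
    have h2 : algebraMap R ((R ⧸ I) ⊗[R] (R ⧸ J)) j = 0 := by
      rw [Algebra.TensorProduct.algebraMap_apply' j, Ideal.Quotient.algebraMap_eq,
        Ideal.Quotient.eq_zero_iff_mem.mpr hj, TensorProduct.tmul_zero]
    rw [h1, h2, add_zero]
  · exact algHom_eq_id (algebraMap_quot_surjective _) _
  · exact algHom_eq_id (algebraMap_qtq_surjective I J) _

lemma isLocalization_quotient (hR : ∀ a : R, ∃ x, a * x * a = a) (Q : Ideal R)
    (hQ : Q.IsPrime) : IsLocalization Q.primeCompl (R ⧸ Q) := by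
  refine ⟨⟨?_, ?_, ?_⟩⟩
  · rintro ⟨s, hs⟩
    obtain ⟨x, hx⟩ := hR s
    apply IsUnit.of_mul_eq_one (Ideal.Quotient.mk Q x)
    rw [Ideal.Quotient.algebraMap_eq, ← map_mul, ← map_one (Ideal.Quotient.mk Q),
      Ideal.Quotient.mk_eq_mk_iff_sub_mem]
    have h0 : s * (s * x - 1) ∈ Q := by
      have h : s * (s * x - 1) = 0 := by linear_combination hx
      rw [h]; exact Q.zero_mem
    rcases hQ.mem_or_mem h0 with h | h
    · exact absurd h hs
    · exact h
  · intro z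
    obtain ⟨r, rfl⟩ := Ideal.Quotient.mk_surjective z
    exact ⟨(r, 1), by simp [Ideal.Quotient.algebraMap_eq]⟩
  · intro x y h
    rw [Ideal.Quotient.algebraMap_eq, Ideal.Quotient.mk_eq_mk_iff_sub_mem] at h
    obtain ⟨z, hz⟩ := hR (x - y)
    refine ⟨⟨1 - z * (x - y), fun hmem => ?_⟩, ?_⟩
    · have h1 : z * (x - y) ∈ Q := Q.mul_mem_left z h
      have := Q.add_mem hmem h1
      simp only [sub_add_cancel] at this
      exact hQ.ne_top ((Ideal.eq_top_iff_one _).mpr this)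
    · show (1 - z * (x - y)) * x = (1 - z * (x - y)) * y
      linear_combination -hz

lemma equiv_nontrivial_iff {α β : Type*} (e : α ≃ β) : Nontrivial α ↔ Nontrivial β :=
  ⟨fun h => e.symm.nontrivial, fun h => e.nontrivial⟩

lemma sup_ne_top_iff_le {I Q : Ideal R} (hmax : Q.IsMaximal) : I ⊔ Q ≠ ⊤ ↔ I ≤ Q := by
  constructor
  · intro h
    by_contra hle
    have hlt : Q < I ⊔ Q := lt_of_le_of_ne le_sup_right (fun he => hle (he ▸ le_sup_left))
    exact h ((Ideal.isMaximal_def.mp hmax).2 _ hlt)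
  · intro h
    rw [sup_eq_right.mpr h]
    exact hmax.ne_top

lemma quot_nontrivial_iff {K : Ideal R} : Nontrivial (R ⧸ K) ↔ K ≠ ⊤ := by
  rw [← not_subsingleton_iff_nontrivial, not_iff_not, Ideal.Quotient.subsingleton_iff]

end Aux

/-- `(R/s_σ R) ⊗_R (R/Q) ≅ R/(s_σ R + Q)`, which is nonzero iff
`Q ∈ δ^σ Spec R`; hence the support of `R/s_σ R` equals the maximal perfect
subset `δ^σ Spec R`. -/
theorem stmt19 (R : Type*) [CommRing R] (hR : ∀ a : R, ∃ x, a * x * a = a)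
    (hns : ¬ IsSemiArtinian R) (σ : Ordinal.{0})
    (hστ : loewy R σ = loewy R (σ + 1))
    (hmin : ∀ β < σ, loewy R β ≠ loewy R (β + 1))
    (Q : PrimeSpectrum R) :
    Nonempty ((R ⧸ loewy R σ) ⊗[R] (R ⧸ Q.asIdeal) ≃ₐ[R]
      R ⧸ (loewy R σ ⊔ Q.asIdeal)) ∧
    (Nontrivial ((R ⧸ loewy R σ) ⊗[R] (R ⧸ Q.asIdeal)) ↔
      Q ∈ cbDeriv (PrimeSpectrum R) σ) ∧
    {Q' : PrimeSpectrum R |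
        Nontrivial ((R ⧸ loewy R σ) ⊗[R] Localization.AtPrime Q'.asIdeal)} =
      cbDeriv (PrimeSpectrum R) σ := by
  have hmain := loewy_le_iff R hR σ
  have hQmax : Q.asIdeal.IsMaximal := vnr_isMaximal hR _ Q.isPrime
  refine ⟨⟨quotTensorQuot (loewy R σ) Q.asIdeal⟩, ?_, ?_⟩
  · rw [equiv_nontrivial_iff (quotTensorQuot (loewy R σ) Q.asIdeal).toEquiv,
      quot_nontrivial_iff, sup_ne_top_iff_le hQmax]
    exact hmain Q
  · ext Q'
    haveI hloc : IsLocalization Q'.asIdeal.primeCompl (R ⧸ Q'.asIdeal) :=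
      isLocalization_quotient hR _ Q'.isPrime
    have e3 : ((R ⧸ loewy R σ) ⊗[R] Localization.AtPrime Q'.asIdeal) ≃ₐ[R]
        ((R ⧸ loewy R σ) ⊗[R] (R ⧸ Q'.asIdeal)) :=
      Algebra.TensorProduct.congr AlgEquiv.refl
        (IsLocalization.algEquiv Q'.asIdeal.primeCompl _ _)
    simp only [Set.mem_setOf_eq]
    rw [equiv_nontrivial_iff e3.toEquiv,
      equiv_nontrivial_iff (quotTensorQuot (loewy R σ) Q'.asIdeal).toEquiv,
      quot_nontrivial_iff, sup_ne_top_iff_le (vnr_isMaximal hR _ Q'.isPrime)]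
    exact hmain Q'
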